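/- arXiv:hep-th/0502030 — 3 statements merged into one kernel-verified Lean document; each statement's English description precedes it below -/
import Mathlib

section
/- For every positive integer m, the integral \(\int_0^\infty \frac{r^{2m-1}}{1+e^{2\pi r}}\,dr\) converges and equals \((-1)^{m-1}\,(1-2^{1-2m})\,\frac{B_{2m}}{4m}\), where \(B_{2m}\) denotes the \(2m\)-th Bernoulli number. -/
open MeasureTheory Real Set

private lemma fd_alt_hasSum (M : ℕ) (hM : M ≠ 0) :
    HasSum (fun n : ℕ => (-1:ℝ)^n * (1 / ((n:ℝ)+1)^(2*M)))
      ((1 - 2 * ((2:ℝ)^(2*M))⁻¹) *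
        ((-1:ℝ)^(M+1) * 2^(2*M-1) * π^(2*M) * ((bernoulli (2*M) : ℚ) : ℝ) / (2*M).factorial)) := by
  set Z : ℝ := (-1:ℝ)^(M+1) * 2^(2*M-1) * π^(2*M) * ((bernoulli (2*M):ℚ):ℝ) / (2*M).factorial with hZdef
  have hZ : HasSum (fun n : ℕ => 1 / (n:ℝ)^(2*M)) Z := hasSum_zeta_nat hM
  have hEv : HasSum (fun j : ℕ => if Even j then 1/(j:ℝ)^(2*M) else 0) (((2:ℝ)^(2*M))⁻¹ * Z) := by
    have h2 : HasSum (fun n : ℕ => ((2:ℝ)^(2*M))⁻¹ * (1/(n:ℝ)^(2*M)))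
        (((2:ℝ)^(2*M))⁻¹ * Z) := hZ.mul_left _
    have hinj : Function.Injective (fun n : ℕ => 2*n) := fun a b h => by
      simpa using h
    rw [← hinj.hasSum_iff]
    · convert h2 using 1
      funext n
      simp only [Function.comp]
      rw [if_pos ⟨n, (two_mul n)⟩]
      push_cast
      rw [mul_pow, one_div, mul_inv, one_div]
    · intro j hj
      rw [if_neg]
      rintro ⟨r, hr⟩
      exact hj ⟨r, by simp only []; omega⟩
  have hAlt : HasSum (fun j : ℕ => (-1:ℝ)^(j+1) * (1/(j:ℝ)^(2*M)))
      (Z - 2*(((2:ℝ)^(2*M))⁻¹ * Z)) := by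
    have h3 := hZ.sub (hEv.mul_left 2)
    convert h3 using 1
    · rfl
    funext j
    rcases Nat.even_or_odd j with h | h
    · rw [if_pos h, (h.add_one).neg_one_pow]
      ring
    · rw [if_neg (Nat.not_even_iff_odd.mpr h), (h.add_one).neg_one_pow]
      ring
  have hshift : HasSum (fun n : ℕ => (-1:ℝ)^(n+1+1) * (1/((n:ℝ)+1)^(2*M)))
      (Z - 2*(((2:ℝ)^(2*M))⁻¹ * Z)) := by
    have := (hasSum_nat_add_iff (f := fun j : ℕ => (-1:ℝ)^(j+1) * (1/(j:ℝ)^(2*M))) (g := Z - 2*(((2:ℝ)^(2*M))⁻¹ * Z)) 1).mpr ?_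
    · convert this using 2 with n
      · rfl
      push_cast
      ring_nf
    · convert hAlt using 1
      · rfl
      have h0 : ((0:ℕ):ℝ)^(2*M) = 0 := by
        simp [pow_eq_zero_iff, hM]
      simp [h0, hM]
  convert hshift using 1
  · funext n
    have : (-1:ℝ)^(n+1+1) = (-1:ℝ)^n := by
      rw [pow_succ, pow_succ]; ring
    rw [this]
  · rw [hZdef]; ring

private lemma fd_int_val (k : ℕ) {b : ℝ} (hb : 0 < b) :
    ∫ r in Ioi (0:ℝ), r^k * Real.exp (-(b*r)) = (k.factorial : ℝ) / b^(k+1) := by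
  have h := Real.integral_rpow_mul_exp_neg_mul_Ioi (a := (k:ℝ)+1) (by positivity) hb
  rw [show ((k:ℝ)+1-1) = (k:ℝ) by ring] at h
  simp_rw [Real.rpow_natCast] at h
  rw [h, Real.Gamma_nat_eq_factorial,
    show ((k:ℝ)+1) = ((k+1 : ℕ):ℝ) by push_cast; ring, Real.rpow_natCast, div_pow, one_pow]
  ring

private lemma fd_integrable (k : ℕ) {b : ℝ} (hb : 0 < b) :
    IntegrableOn (fun r : ℝ => r^k * Real.exp (-(b*r))) (Ioi 0) := by
  have h := integrableOn_rpow_mul_exp_neg_mul_rpow (s := (k:ℝ)) (p := 1)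
    (lt_of_lt_of_le neg_one_lt_zero (Nat.cast_nonneg k)) one_pos hb
  refine h.congr_fun (fun x hx => ?_) measurableSet_Ioi
  beta_reduce
  rw [Real.rpow_one, Real.rpow_natCast, neg_mul]

/-- For every positive integer `m`, the integral `∫_0^∞ r^(2m-1)/(1+e^(2πr)) dr`
converges and equals `(-1)^(m-1) (1 - 2^(1-2m)) B_{2m}/(4m)`. -/
theorem fermi_dirac_integral_eq_bernoulli (m : ℕ) (hm : 1 ≤ m) :
    IntegrableOn (fun r : ℝ => r ^ (2 * m - 1) / (1 + Real.exp (2 * π * r))) (Ioi 0) ∧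
    ∫ r in Ioi (0 : ℝ), r ^ (2 * m - 1) / (1 + Real.exp (2 * π * r)) =
      (-1 : ℝ) ^ (m - 1) * (1 - (2 : ℝ) ^ ((1 : ℤ) - 2 * m)) *
        (((bernoulli (2 * m) : ℚ) : ℝ) / (4 * m)) := by
  obtain ⟨M, rfl⟩ : ∃ M, m = M + 1 := ⟨m-1, by omega⟩
  set k : ℕ := 2*M+1 with hkdef
  have hkeq : 2*(M+1)-1 = k := by omega
  have hk1 : k + 1 = 2*(M+1) := by omega
  rw [hkeq]
  set c : ℝ := 2*π with hcdef
  have hc0 : 0 < c := by positivity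
  have hden : ∀ r : ℝ, 0 < 1 + Real.exp (c*r) := fun r => by positivity
  have hcont : Continuous (fun r : ℝ => r ^ k / (1 + Real.exp (c * r))) :=
    (continuous_pow k).div (by continuity) (fun r => (hden r).ne')
  set F : ℕ → ℝ → ℝ := fun n r => (-1:ℝ)^n * (r^k * Real.exp (-(c*(n+1)*r))) with hFdef
  have hb0 : ∀ n : ℕ, (0:ℝ) < c*(n+1) := fun n => by positivity
  have hFint : ∀ n, IntegrableOn (F n) (Ioi 0) := fun n =>
    ((fd_integrable k (hb0 n)).const_mul _)
  have hval : ∀ n, ∫ r in Ioi (0:ℝ), F n r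
      = (-1:ℝ)^n * ((k.factorial:ℝ)/(c*(n+1))^(k+1)) := by
    intro n
    rw [hFdef]
    simp only []
    rw [MeasureTheory.integral_const_mul, fd_int_val k (hb0 n)]
  have hnorm : ∀ n, ∫ r in Ioi (0:ℝ), ‖F n r‖
      = (k.factorial:ℝ)/(c*(n+1))^(k+1) := by
    intro n
    rw [← fd_int_val k (hb0 n)]
    refine setIntegral_congr_fun measurableSet_Ioi (fun r hr => ?_)
    rw [hFdef]
    simp only [Real.norm_eq_abs, abs_mul, abs_pow, abs_neg, abs_one, one_pow, one_mul,
      abs_of_pos (mem_Ioi.mp hr), Real.abs_exp]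
  have hAlt := fd_alt_hasSum (M+1) (by omega)
  set A : ℝ := (1 - 2 * ((2:ℝ)^(2*(M+1)))⁻¹) *
      ((-1:ℝ)^(M+1+1) * 2^(2*(M+1)-1) * π^(2*(M+1)) *
        ((bernoulli (2*(M+1)) : ℚ) : ℝ) / (2*(M+1)).factorial) with hAdef
  have hS : HasSum (fun n => ∫ r in Ioi (0:ℝ), F n r) (((k.factorial:ℝ)/c^(k+1)) * A) := by
    have h1 := hAlt.mul_left ((k.factorial:ℝ)/c^(k+1))
    rw [← hk1] at h1
    convert h1 using 1
    · rfl
    funext n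
    rw [hval n, mul_pow]
    have h2 : ((n:ℝ)+1)^(k+1) ≠ 0 := by positivity
    have h3 : c^(k+1) ≠ 0 := by positivity
    field_simp
  have hsum_norm : Summable (fun n => ∫ r in Ioi (0:ℝ), ‖F n r‖) := by
    have h2 := hS.summable.abs
    refine h2.congr (fun n => ?_)
    rw [hval n, hnorm n, abs_mul, abs_pow, abs_neg, abs_one, one_pow, one_mul,
      abs_of_nonneg (by positivity)]
  have key := MeasureTheory.hasSum_integral_of_summable_integral_norm
    (μ := volume.restrict (Ioi (0:ℝ))) hFint hsum_norm
  have hIeq : ∫ r in Ioi (0:ℝ), ∑' n, F n r = ((k.factorial:ℝ)/c^(k+1)) * A := key.unique hS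
  have hpt : EqOn (fun r : ℝ => r^k/(1+Real.exp (c*r))) (fun r : ℝ => ∑' n, F n r) (Ioi 0) := by
    intro r hr
    rw [mem_Ioi] at hr
    have hx : |(-Real.exp (-(c*r)))| < 1 := by
      rw [abs_neg, Real.abs_exp]
      exact Real.exp_lt_one_iff.mpr (by nlinarith)
    have hg := (hasSum_geometric_of_abs_lt_one hx).mul_left (r^k * Real.exp (-(c*r)))
    have hfun : (fun n : ℕ => (r^k*Real.exp (-(c*r))) * (-Real.exp (-(c*r)))^n)
        = fun n => F n r := by
      funext n
      simp only [hFdef]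
      rw [show Real.exp (-(c*((n:ℝ)+1)*r)) = Real.exp (-(c*r)) * Real.exp (-(c*r))^n from by
        rw [← Real.exp_nat_mul, ← Real.exp_add]; congr 1; ring,
        neg_pow]
      ring
    rw [hfun] at hg
    simp only []
    rw [hg.tsum_eq, sub_neg_eq_add]
    have he : Real.exp (-(c*r)) = (Real.exp (c*r))⁻¹ := by rw [← Real.exp_neg]
    rw [he]
    have hE : Real.exp (c*r) ≠ 0 := Real.exp_ne_zero _
    have hE2 : (1:ℝ) + (Real.exp (c*r))⁻¹ ≠ 0 := by positivity
    field_simp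
    ring
  constructor
  · refine Integrable.mono' (fd_integrable k hc0) hcont.aestronglyMeasurable.restrict ?_
    filter_upwards [ae_restrict_mem measurableSet_Ioi] with r hr
    rw [mem_Ioi] at hr
    rw [Real.norm_eq_abs, abs_of_nonneg (by positivity)]
    rw [div_le_iff₀ (hden r)]
    have hEc : Real.exp (-(c*r)) * Real.exp (c*r) = 1 := by rw [← Real.exp_add]; simp
    have h4 : r^k * (Real.exp (-(c*r)) * Real.exp (c*r)) = r^k := by rw [hEc, mul_one]
    nlinarith [mul_nonneg (pow_nonneg hr.le k) (Real.exp_pos (-(c*r))).le, h4]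
  · have hmain : ∫ r in Ioi (0:ℝ), r^k/(1+Real.exp (c*r))
        = ((k.factorial:ℝ)/c^(k+1)) * A := by
      rw [setIntegral_congr_fun measurableSet_Ioi hpt]
      exact hIeq
    rw [hmain, hAdef, hcdef, hkdef]
    have hfac : ((2*(M+1)).factorial : ℝ) = (2*M+2) * ((2*M+1).factorial : ℝ) := by
      rw [show 2*(M+1) = (2*M+1)+1 from by ring, Nat.factorial_succ]
      push_cast; ring
    have hz : (2:ℝ)^((1:ℤ) - 2*((M+1:ℕ):ℤ)) = ((2:ℝ)^(2*M+1 : ℕ))⁻¹ := by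
      rw [show (1:ℤ) - 2*((M+1:ℕ):ℤ) = -((2*M+1 : ℕ):ℤ) from by push_cast; ring,
        zpow_neg, zpow_natCast]
    rw [hz, hfac, show M+1-1 = M from by omega, show 2*(M+1)-1 = 2*M+1 from by omega, mul_pow]
    have hfa : ((2*M+1).factorial : ℝ) ≠ 0 := by positivity
    have hpi : (π:ℝ) ≠ 0 := Real.pi_ne_zero
    push_cast
    field_simp
    ring
end

section
/- Fix a natural number \(\ell\) and define \(\xi_{n\ell} = \frac{(-1)^{\ell+1}\,(1-2^{-2\ell-2n-1})}{n!\,(2\ell+2n+2)}\, B_{2\ell+2n+2}\) for \(n\ge 0\), where \(B_m\) are the Bernoulli numbers. Then for every natural number \(N\) there exist constants \(C>0\) and \(\delta>0\) such that for all \(0<t<\delta\), \[\Big|\,2\int_{0}^{\infty}\frac{r^{2\ell+1}\, e^{-t r^{2}}}{1+e^{2\pi r}}\,dr \;+\; \sum_{n=0}^{N}\xi_{n\ell}\, t^{n}\,\Big| \le C\, t^{N+1}.\] In other words, \(2\int_{0}^{\infty}\frac{r^{2\ell+1} e^{-t r^{2}}}{1+e^{2\pi r}}dr \sim -\sum_{n\ge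 0}\xi_{n\ell} t^{n}\) as \(t\to 0^+\). -/
open MeasureTheory Real Set

/-- The coefficients `ξ_{nℓ}` of the paper, Eq. (16). -/
noncomputable def xi (n ℓ : ℕ) : ℝ :=
  (-1 : ℝ) ^ (ℓ + 1) * (1 - (2 : ℝ) ^ (-(2 * (ℓ : ℤ) + 2 * n + 1))) /
      ((n.factorial : ℝ) * (2 * ℓ + 2 * n + 2)) *
    ((bernoulli (2 * ℓ + 2 * n + 2) : ℚ) : ℝ)

lemma exp_taylor_bound (N : ℕ) : ∀ {x : ℝ}, 0 ≤ x →
    |Real.exp (-x) - ∑ n ∈ Finset.range (N+1), (-x)^n / n.factorial|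
      ≤ x^(N+1) / (N+1).factorial := by
  induction N with
  | zero =>
      intro x hx
      have hs : ∑ n ∈ Finset.range (0+1), (-x)^n / (n.factorial : ℝ) = 1 := by
        norm_num
      rw [hs, abs_le]
      have h0 := Real.add_one_le_exp (-x)
      have h1 : Real.exp (-x) ≤ 1 := Real.exp_le_one_iff.mpr (by linarith)
      constructor <;> · norm_num; linarith
  | succ N ih =>
      intro x hx
      have hderiv : ∀ y : ℝ, HasDerivAt
          (fun y : ℝ => Real.exp (-y) - ∑ n ∈ Finset.range (N+2), (-y)^n / n.factorial)
          (-(Real.exp (-y) - ∑ n ∈ Finset.range (N+1), (-y)^n / n.factorial)) y := by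
        intro y
        have h1 : HasDerivAt (fun y : ℝ => Real.exp (-y)) (-Real.exp (-y)) y := by
          exact ((Real.hasDerivAt_exp (-y)).comp y (hasDerivAt_neg y)).congr_deriv (by ring)
        have hterm : ∀ n : ℕ, HasDerivAt (fun y : ℝ => (-y)^n / n.factorial)
            ((n : ℝ) * (-y)^(n-1) * (-1) / n.factorial) y := by
          intro n
          have := ((hasDerivAt_pow n (-y)).comp y (hasDerivAt_neg y)).div_const
            (n.factorial : ℝ)
          simpa using this
        have h2 := HasDerivAt.fun_sum (fun n (_ : n ∈ Finset.range (N+2)) => hterm n)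
        have hsum : ∑ n ∈ Finset.range (N+2), (n : ℝ) * (-y)^(n-1) * (-1) / n.factorial
            = -∑ n ∈ Finset.range (N+1), (-y)^n / n.factorial := by
          rw [Finset.sum_range_succ' (fun n => (n : ℝ) * (-y)^(n-1) * (-1) / n.factorial) (N+1)]
          simp only [Nat.cast_zero, zero_mul, zero_div, add_zero, Nat.add_sub_cancel,
            Nat.factorial_succ, Nat.cast_mul, Nat.cast_add, Nat.cast_one]
          rw [← Finset.sum_neg_distrib]
          apply Finset.sum_congr rfl
          intro i _
          have hfac : ((i.factorial : ℝ)) ≠ 0 := Nat.cast_ne_zero.mpr i.factorial_ne_zero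
          have : ((i:ℝ) + 1) ≠ 0 := by positivity
          field_simp
        rw [hsum] at h2
        have := h1.sub h2
        exact this.congr_deriv (by ring)
      have hcont : Continuous fun y : ℝ =>
          -(Real.exp (-y) - ∑ n ∈ Finset.range (N+1), (-y)^n / n.factorial) := by
        fun_prop
      have hFTC : Real.exp (-x) - ∑ n ∈ Finset.range (N+2), (-x)^n / n.factorial
          = ∫ s in (0:ℝ)..x,
            -(Real.exp (-s) - ∑ n ∈ Finset.range (N+1), (-s)^n / n.factorial) := by
        have h := intervalIntegral.integral_eq_sub_of_hasDerivAt (fun s _ => hderiv s)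
          (hcont.intervalIntegrable 0 x)
        have h0 : Real.exp (-(0:ℝ)) - ∑ n ∈ Finset.range (N+2), (-(0:ℝ))^n / n.factorial
            = 0 := by
          simp [Finset.sum_range_succ']
        rw [h, h0, sub_zero]
      show |Real.exp (-x) - ∑ n ∈ Finset.range (N+2), (-x)^n / n.factorial|
          ≤ x^(N+2) / (N+2).factorial
      rw [hFTC]
      have hb : ∀ᵐ s ∂MeasureTheory.volume.restrict (Set.uIoc (0:ℝ) x),
          ‖-(Real.exp (-s) - ∑ n ∈ Finset.range (N+1), (-s)^n / n.factorial)‖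
          ≤ s^(N+1) / (N+1).factorial := by
        refine MeasureTheory.ae_restrict_of_forall_mem measurableSet_uIoc ?_
        intro s hs
        rw [Set.uIoc_of_le hx] at hs
        rw [norm_neg, Real.norm_eq_abs]
        exact ih hs.1.le
      have hgint : IntervalIntegrable (fun s : ℝ => s^(N+1) / (N+1).factorial)
          MeasureTheory.volume 0 x := by
        apply Continuous.intervalIntegrable; fun_prop
      calc |∫ s in (0:ℝ)..x, -(Real.exp (-s) - ∑ n ∈ Finset.range (N+1), (-s)^n / n.factorial)|
          ≤ |∫ s in (0:ℝ)..x, s^(N+1) / (N+1).factorial| :=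
            intervalIntegral.norm_integral_le_abs_of_norm_le hb hgint
        _ = x^(N+2) / (N+2).factorial := by
            rw [intervalIntegral.integral_div, integral_pow]
            rw [zero_pow (by omega : N+1+1 ≠ 0), sub_zero, Nat.factorial_succ (N+1)]
            have hx2 : (0:ℝ) ≤ x^(N+1+1) := pow_nonneg hx _
            rw [abs_of_nonneg (by positivity)]
            push_cast
            field_simp
            try ring

lemma integrableOn_pow_exp (q : ℕ) {c : ℝ} (hc : 0 < c) :
    IntegrableOn (fun r : ℝ => r ^ q * Real.exp (-(c * r))) (Ioi 0) := by
  have h := integrableOn_rpow_mul_exp_neg_mul_rpow (p := 1) (s := (q : ℝ)) (b := c)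
    (lt_of_lt_of_le neg_one_lt_zero (Nat.cast_nonneg q)) one_pos hc
  have heq : (fun x : ℝ => x ^ (q:ℝ) * Real.exp (-c * x ^ (1:ℝ)))
      = fun r : ℝ => r ^ q * Real.exp (-(c * r)) := by
    funext x
    rw [Real.rpow_one, Real.rpow_natCast, neg_mul]
  rwa [heq] at h

lemma integral_pow_exp (q : ℕ) {c : ℝ} (hc : 0 < c) :
    ∫ r in Ioi (0:ℝ), r ^ q * Real.exp (-(c * r)) = q.factorial / c ^ (q + 1) := by
  have h := integral_rpow_mul_exp_neg_mul_Ioi (a := (q:ℝ) + 1) (r := c)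
    (by positivity) hc
  rw [show ((q:ℝ) + 1 - 1) = (q:ℝ) by ring] at h
  calc ∫ r in Ioi (0:ℝ), r ^ q * Real.exp (-(c * r))
      = ∫ t in Ioi (0:ℝ), t ^ (q:ℝ) * Real.exp (-(c * t)) := by
        congr 1; funext t; rw [Real.rpow_natCast]
    _ = (1 / c) ^ ((q:ℝ) + 1) * Real.Gamma ((q:ℝ) + 1) := h
    _ = q.factorial / c ^ (q + 1) := by
        rw [show ((q:ℝ) + 1) = ((q + 1 : ℕ) : ℝ) by push_cast; ring, Real.rpow_natCast,
          show ((q + 1 : ℕ) : ℝ) = (q:ℝ) + 1 by push_cast; ring, Real.Gamma_nat_eq_factorial]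
        rw [div_pow, one_pow]
        ring

lemma geom_hasSum {r : ℝ} (hr : 0 < r) :
    HasSum (fun k : ℕ => (-1:ℝ)^k * Real.exp (-(2*π*(k+1)*r)))
      (1 / (1 + Real.exp (2*π*r))) := by
  have hx : ‖(-Real.exp (-(2*π*r)))‖ < 1 := by
    rw [norm_neg, Real.norm_eq_abs, abs_of_pos (Real.exp_pos _)]
    apply Real.exp_lt_one_iff.mpr
    have : 0 < 2*π*r := by positivity
    linarith
  have h := (hasSum_geometric_of_norm_lt_one hx).mul_left (Real.exp (-(2*π*r)))
  have heq : (fun k : ℕ => Real.exp (-(2*π*r)) * (-Real.exp (-(2*π*r)))^k)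
      = fun k : ℕ => (-1:ℝ)^k * Real.exp (-(2*π*(k+1)*r)) := by
    funext k
    rw [neg_pow, ← Real.exp_nat_mul, mul_left_comm, ← Real.exp_add]
    congr 1
    ring
  rw [heq] at h
  rw [show (1 / (1 + Real.exp (2*π*r))) = Real.exp (-(2*π*r)) * (1 - -Real.exp (-(2*π*r)))⁻¹ from ?_]
  · exact h
  have hepos := Real.exp_pos (2*π*r)
  have : Real.exp (-(2*π*r)) = (Real.exp (2*π*r))⁻¹ := by
    rw [← Real.exp_neg]
  rw [this, sub_neg_eq_add]
  field_simp
  ring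

lemma hasSum_eta (m : ℕ) (hm : m ≠ 0) (Z : ℝ)
    (hZ : HasSum (fun n : ℕ => 1 / (n:ℝ)^(2*m)) Z) :
    HasSum (fun k : ℕ => (-1:ℝ)^k / ((k:ℝ)+1)^(2*m))
      ((1 - (2:ℝ)^(1-2*(m:ℤ))) * Z) := by
  set f : ℕ → ℝ := fun n => 1 / (n:ℝ)^(2*m) with hf
  have hev : HasSum (fun n : ℕ => f (2*n)) ((2:ℝ)^(-(2*(m:ℤ))) * Z) := by
    have h := hZ.mul_left ((2:ℝ)^(-(2*(m:ℤ))))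
    have : (fun n : ℕ => (2:ℝ)^(-(2*(m:ℤ))) * (1 / (n:ℝ)^(2*m)))
        = fun n : ℕ => f (2*n) := by
      funext n
      simp only [hf]
      push_cast
      rw [mul_pow, zpow_neg, ← zpow_natCast (2:ℝ) (2*m)]
      push_cast
      rw [one_div, one_div, mul_inv]
    rwa [this] at h
  have he : HasSum (fun n : ℕ => if Even n then f n else 0) ((2:ℝ)^(-(2*(m:ℤ))) * Z) := by
    have hinj : Function.Injective (fun n : ℕ => 2*n) := fun a b h => by simpa using h
    refine (Function.Injective.hasSum_iff hinj ?_).mp ?_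
    · intro x hx
      have : ¬ Even x := by
        simp only [Set.mem_range, not_exists] at hx
        intro ⟨c, hc⟩; exact hx c (by omega)
      simp [this]
    · have : ((fun n : ℕ => if Even n then f n else 0) ∘ (fun n : ℕ => 2*n))
          = fun n : ℕ => f (2*n) := by
        funext n; simp [Function.comp, even_two_mul]
      rw [this]; exact hev
  have hsub := hZ.sub (he.mul_left 2)
  have hval : Z - 2 * ((2:ℝ)^(-(2*(m:ℤ))) * Z) = (1 - (2:ℝ)^(1-2*(m:ℤ))) * Z := by
    have h2 : (2:ℝ) * (2:ℝ)^(-(2*(m:ℤ))) = (2:ℝ)^(1-2*(m:ℤ)) := by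
      rw [show (1-2*(m:ℤ)) = 1 + (-(2*(m:ℤ))) by ring, zpow_add₀ (by norm_num : (2:ℝ) ≠ 0),
        zpow_one]
    rw [← mul_assoc, h2]; ring
  rw [hval] at hsub
  have hg : (fun n : ℕ => f n - 2 * (if Even n then f n else 0))
      = fun n : ℕ => (-1:ℝ)^(n+1) * f n := by
    funext n
    by_cases hn : Even n
    · rw [if_pos hn, Odd.neg_one_pow (Even.add_one hn)]
      ring
    · rw [if_neg hn, Even.neg_one_pow (Odd.add_one (Nat.not_even_iff_odd.mp hn))]
      ring
  rw [hg] at hsub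
  have h0 : f 0 = 0 := by
    simp [hf, zero_pow (by omega : 2*m ≠ 0)]
  have hshift : HasSum (fun n : ℕ => (-1:ℝ)^(n+1+1) * f (n+1)) ((1 - (2:ℝ)^(1-2*(m:ℤ))) * Z) := by
    refine (hasSum_nat_add_iff (f := fun n : ℕ => (-1:ℝ)^(n+1) * f n) 1).mpr ?_
    simpa [h0] using hsub
  have : (fun n : ℕ => (-1:ℝ)^(n+1+1) * f (n+1)) = fun k : ℕ => (-1:ℝ)^k / ((k:ℝ)+1)^(2*m) := by
    funext k
    rw [hf]
    push_cast
    rw [pow_succ, pow_succ]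
    ring
  rwa [this] at hshift

lemma two_integral_eq (j : ℕ) :
    2 * ∫ r in Ioi (0:ℝ), r^(2*j+1) / (1 + Real.exp (2*π*r))
      = (-1:ℝ)^j * (1 - (2:ℝ)^(-(2*(j:ℤ)+1))) * ((bernoulli (2*j+2) : ℚ) : ℝ) / (2*j+2) := by
  have hπ : (0:ℝ) < π := Real.pi_pos
  set F : ℕ → ℝ → ℝ := fun k r => (-1:ℝ)^k * (r^(2*j+1) * Real.exp (-(2*π*((k:ℝ)+1)*r)))
    with hF
  have hc : ∀ k : ℕ, (0:ℝ) < 2*π*((k:ℝ)+1) := by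
    intro k; positivity
  have hF_int : ∀ k : ℕ, Integrable (F k) (volume.restrict (Ioi 0)) := by
    intro k
    exact (integrableOn_pow_exp (2*j+1) (hc k)).const_mul ((-1:ℝ)^k)
  have hnorm : ∀ k : ℕ, ∫ r in Ioi (0:ℝ), ‖F k r‖
      = (2*j+1).factorial / (2*π*((k:ℝ)+1))^(2*j+2) := by
    intro k
    rw [← integral_pow_exp (2*j+1) (hc k)]
    apply setIntegral_congr_fun measurableSet_Ioi
    intro r hr
    rw [hF]
    simp only [norm_mul, norm_pow, norm_neg, norm_one, one_pow, one_mul, Real.norm_eq_abs,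
      abs_of_pos (Real.exp_pos _), abs_of_pos (show (0:ℝ) < r from hr)]
  have hs : Summable (fun k : ℕ => 1/(((k:ℝ)+1))^(2*j+2)) := by
    have h1 := (Real.summable_one_div_nat_pow (p := 2*j+2)).mpr (by omega)
    have h2 := (summable_nat_add_iff 1).mpr h1
    apply h2.congr
    intro k; push_cast; ring
  have hF_sum : Summable fun k : ℕ => ∫ r in Ioi (0:ℝ), ‖F k r‖ := by
    apply Summable.congr ((hs.mul_left ((2*j+1).factorial / (2*π)^(2*j+2)))) ?_
    intro k
    have hn := hnorm k
    rw [mul_pow (2*π) ((k:ℝ)+1), div_mul_eq_div_mul_one_div] at hn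
    rw [hn]
  have hkey := hasSum_integral_of_summable_integral_norm hF_int hF_sum
  have hint : ∀ k : ℕ, ∫ r in Ioi (0:ℝ), F k r
      = (-1:ℝ)^k * ((2*j+1).factorial / (2*π*((k:ℝ)+1))^(2*j+2)) := by
    intro k
    rw [hF]
    simp only []
    rw [MeasureTheory.integral_const_mul, integral_pow_exp (2*j+1) (hc k)]
  have htsum : ∫ r in Ioi (0:ℝ), (∑' k, F k r)
      = ∫ r in Ioi (0:ℝ), r^(2*j+1) / (1 + Real.exp (2*π*r)) := by
    apply setIntegral_congr_fun measurableSet_Ioi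
    intro r hr
    show (∑' k, F k r) = r^(2*j+1) / (1 + Real.exp (2*π*r))
    have hg := (geom_hasSum (hr : (0:ℝ) < r)).mul_left (r^(2*j+1))
    have : (fun k : ℕ => r^(2*j+1) * ((-1:ℝ)^k * Real.exp (-(2*π*((k:ℝ)+1)*r))))
        = fun k : ℕ => F k r := by
      funext k; rw [hF]; ring
    rw [this] at hg
    rw [hg.tsum_eq]
    ring
  -- zeta side
  have hZ : HasSum (fun n : ℕ => 1 / (n:ℝ)^(2*(j+1)))
      ((-1 : ℝ) ^ (j+1+1) * (2 : ℝ) ^ (2*(j+1) - 1) * π ^ (2*(j+1)) *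
        bernoulli (2*(j+1)) / ((2*(j+1)).factorial : ℝ)) := hasSum_zeta_nat (Nat.succ_ne_zero j)
  have e1 : 2*(j+1) = 2*j+2 := by ring
  have e2 : 2*(j+1) - 1 = 2*j+1 := by omega
  rw [e2, e1] at hZ
  have heta := hasSum_eta (j+1) (Nat.succ_ne_zero j) _ (by rw [e1]; exact hZ)
  rw [e1] at heta
  have heta2 := heta.mul_left ((((2*j+1).factorial : ℝ)) / (2*π)^(2*j+2))
  have hfun : (fun k : ℕ => (((2*j+1).factorial : ℝ)) / (2*π)^(2*j+2)
        * ((-1:ℝ)^k / ((k:ℝ)+1)^(2*j+2)))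
      = fun k : ℕ => (-1:ℝ)^k * ((2*j+1).factorial / (2*π*((k:ℝ)+1))^(2*j+2)) := by
    funext k
    rw [mul_pow (2*π) ((k:ℝ)+1), div_mul_eq_div_mul_one_div]
    ring
  rw [hfun] at heta2
  have hkey2 : HasSum (fun k : ℕ => (-1:ℝ)^k * (((2*j+1).factorial : ℝ) / (2*π*((k:ℝ)+1))^(2*j+2)))
      (∫ r in Ioi (0:ℝ), r^(2*j+1) / (1 + Real.exp (2*π*r))) := by
    have h := hkey
    rw [htsum, show (fun k : ℕ => ∫ r in Ioi (0:ℝ), F k r)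
      = fun k : ℕ => (-1:ℝ)^k * (((2*j+1).factorial : ℝ) / (2*π*((k:ℝ)+1))^(2*j+2))
      from funext hint] at h
    exact h
  have hval := hkey2.unique heta2
  rw [hval]
  -- final algebra
  have hfac : ((2*j+2).factorial : ℝ) = (2*j+2) * ((2*j+1).factorial : ℝ) := by
    rw [show 2*j+2 = (2*j+1)+1 from rfl, Nat.factorial_succ]
    push_cast
    try ring
  have hz : (2:ℝ)^((1:ℤ)-2*((j+1:ℕ):ℤ)) = (2:ℝ)^(-(2*(j:ℤ)+1)) := by
    rw [show ((1:ℤ)-2*((j+1:ℕ):ℤ)) = -(2*(j:ℤ)+1) by push_cast; ring]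
  rw [hz, hfac]
  have h1 : (-1:ℝ)^(j+1+1) = (-1:ℝ)^j := by
    rw [pow_succ, pow_succ]; ring
  rw [h1]
  have hπne : π ≠ 0 := ne_of_gt hπ
  have hfne : ((2*j+1).factorial : ℝ) ≠ 0 := Nat.cast_ne_zero.mpr (Nat.factorial_ne_zero _)
  field_simp
  ring

lemma denom_pos (r : ℝ) : (0:ℝ) < 1 + Real.exp (2*π*r) := by positivity

lemma cont_denom : Continuous fun r : ℝ => 1 + Real.exp (2*π*r) := by fun_prop

lemma one_div_denom_le (r : ℝ) : 1 / (1 + Real.exp (2*π*r)) ≤ Real.exp (-(2*π*r)) := by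
  rw [div_le_iff₀ (denom_pos r), Real.exp_neg]
  have h := Real.exp_pos (2*π*r)
  rw [inv_mul_eq_div, le_div_iff₀ h]
  ring_nf
  nlinarith [Real.exp_pos (2*π*r)]

lemma integrableOn_pow_div (q : ℕ) :
    IntegrableOn (fun r : ℝ => r^q / (1 + Real.exp (2*π*r))) (Ioi 0) := by
  apply Integrable.mono' (integrableOn_pow_exp q (by positivity : (0:ℝ) < 2*π))
  · exact ((continuous_pow q).div cont_denom (fun r => ne_of_gt (denom_pos r))).aestronglyMeasurable
  · refine ae_restrict_of_forall_mem measurableSet_Ioi (fun r hr => ?_)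
    have hr0 : (0:ℝ) < r := hr
    rw [Real.norm_eq_abs, abs_div, abs_of_pos (denom_pos r), abs_of_pos (by positivity : (0:ℝ) < r^q)]
    calc r^q / (1 + Real.exp (2*π*r)) = r^q * (1/(1 + Real.exp (2*π*r))) := by ring
      _ ≤ r^q * Real.exp (-(2*π*r)) :=
          mul_le_mul_of_nonneg_left (one_div_denom_le r) (by positivity)
      _ = r^q * Real.exp (-(2*π*r)) := rfl

lemma integrableOn_main (q : ℕ) {t : ℝ} (ht : 0 ≤ t) :
    IntegrableOn (fun r : ℝ => r^q * Real.exp (-t*r^2) / (1 + Real.exp (2*π*r))) (Ioi 0) := by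
  apply Integrable.mono' (integrableOn_pow_exp q (by positivity : (0:ℝ) < 2*π))
  · exact (((continuous_pow q).mul (by fun_prop)).div cont_denom
      (fun r => ne_of_gt (denom_pos r))).aestronglyMeasurable
  · refine ae_restrict_of_forall_mem measurableSet_Ioi (fun r hr => ?_)
    have hr0 : (0:ℝ) < r := hr
    have he1 : Real.exp (-t*r^2) ≤ 1 := Real.exp_le_one_iff.mpr (by nlinarith)
    rw [Real.norm_eq_abs, abs_div, abs_of_pos (denom_pos r),
      abs_of_pos (by positivity : (0:ℝ) < r^q * Real.exp (-t*r^2))]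
    calc r^q * Real.exp (-t*r^2) / (1 + Real.exp (2*π*r))
        ≤ r^q * 1 / (1 + Real.exp (2*π*r)) := by
          gcongr
      _ = r^q * (1/(1 + Real.exp (2*π*r))) := by ring
      _ ≤ r^q * Real.exp (-(2*π*r)) :=
          mul_le_mul_of_nonneg_left (one_div_denom_le r) (by positivity)

/-- The remainder integral `2∫_0^∞ r^(2ℓ+1) e^(-tr²)/(1+e^(2πr)) dr` has the
asymptotic expansion `-∑_n ξ_{nℓ} t^n` as `t → 0⁺`. -/
theorem remainder_asymptotic_expansion (ℓ : ℕ) (N : ℕ) :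
    ∃ C > (0 : ℝ), ∃ δ > (0 : ℝ), ∀ t : ℝ, 0 < t → t < δ →
      |2 * (∫ r in Ioi (0 : ℝ),
          r ^ (2 * ℓ + 1) * Real.exp (-t * r ^ 2) / (1 + Real.exp (2 * π * r))) +
        ∑ n ∈ Finset.range (N + 1), xi n ℓ * t ^ n| ≤ C * t ^ (N + 1) := by
  set K := ∫ r in Ioi (0:ℝ), r^(2*ℓ+2*N+3) / (1 + Real.exp (2*π*r)) with hKdef
  have hK0 : 0 ≤ K := setIntegral_nonneg measurableSet_Ioi
    (fun r hr => by have : (0:ℝ) < r := hr; positivity)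
  refine ⟨2*K/(N+1).factorial + 1, by positivity, 1, one_pos, ?_⟩
  intro t ht ht1
  -- notation
  set J : ℕ → ℝ := fun n => ∫ r in Ioi (0:ℝ), r^(2*ℓ+2*n+1) / (1 + Real.exp (2*π*r)) with hJdef
  -- step 1: xi n ℓ * t^n = -(((-t)^n / n!) * (2 * J n))
  have hxi : ∀ n : ℕ, xi n ℓ * t^n = -(((-t)^n / (n.factorial : ℝ)) * (2 * J n)) := by
    intro n
    have h2J : 2 * J n = (-1:ℝ)^(ℓ+n) * (1 - (2:ℝ)^(-(2*(ℓ:ℤ) + 2*n + 1)))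
        * ((bernoulli (2*ℓ+2*n+2) : ℚ) : ℝ) / (2*ℓ+2*n+2 : ℕ) := by
      have h := two_integral_eq (ℓ+n)
      rw [show 2*(ℓ+n)+1 = 2*ℓ+2*n+1 by ring, show 2*(ℓ+n)+2 = 2*ℓ+2*n+2 by ring,
        show (-(2*((ℓ+n:ℕ):ℤ)+1)) = -(2*(ℓ:ℤ) + 2*n + 1) by push_cast; ring] at h
      rw [hJdef]
      simp only []
      rw [h]
      push_cast
      ring
    have hf : ((n.factorial : ℝ)) ≠ 0 := Nat.cast_ne_zero.mpr (Nat.factorial_ne_zero n)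
    have hd : ((2*ℓ+2*n+2 : ℕ) : ℝ) ≠ 0 := by positivity
    have hd' : (2*(ℓ:ℝ)+2*(n:ℝ)+2) ≠ 0 := by positivity
    rw [h2J, xi, pow_add (-1:ℝ) ℓ n, neg_pow t n]
    push_cast
    rcases Nat.even_or_odd n with hp | hp
    · rw [hp.neg_one_pow, pow_succ]
      field_simp
    · rw [hp.neg_one_pow, pow_succ]
      field_simp
  have hsum : ∑ n ∈ Finset.range (N+1), xi n ℓ * t^n
      = -(2 * ∑ n ∈ Finset.range (N+1), ((-t)^n / (n.factorial : ℝ)) * J n) := by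
    rw [Finset.mul_sum, ← Finset.sum_neg_distrib]
    apply Finset.sum_congr rfl
    intro n _
    rw [hxi n]; ring
  rw [hsum]
  have hgoal_eq : (∫ r in Ioi (0:ℝ), r^(2*ℓ+1) * Real.exp (-t*r^2) / (1+Real.exp (2*π*r)))
      = ∫ r in Ioi (0:ℝ), r^(2*ℓ+1) * Real.exp (-(t*r^2)) / (1+Real.exp (2*π*r)) := by
    congr 1; funext r; rw [neg_mul]
  rw [hgoal_eq]
  have hterm_int : ∀ n ∈ Finset.range (N+1), Integrable
      (fun r : ℝ => ((-t)^n / (n.factorial : ℝ)) * (r^(2*ℓ+2*n+1) / (1 + Real.exp (2*π*r))))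
      (volume.restrict (Ioi 0)) :=
    fun n _ => (integrableOn_pow_div (2*ℓ+2*n+1)).const_mul _
  have hsum_int : ∑ n ∈ Finset.range (N+1), ((-t)^n / (n.factorial : ℝ)) * J n
      = ∫ r in Ioi (0:ℝ), ∑ n ∈ Finset.range (N+1),
          ((-t)^n / (n.factorial : ℝ)) * (r^(2*ℓ+2*n+1) / (1 + Real.exp (2*π*r))) := by
    rw [MeasureTheory.integral_finset_sum _ hterm_int]
    apply Finset.sum_congr rfl
    intro n _
    rw [MeasureTheory.integral_const_mul, hJdef]
  have hf_int : Integrable (fun r : ℝ => r^(2*ℓ+1) * Real.exp (-(t*r^2)) / (1+Real.exp (2*π*r)))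
      (volume.restrict (Ioi 0)) := by
    have h := integrableOn_main (2*ℓ+1) ht.le
    apply h.congr
    filter_upwards with r
    rw [neg_mul]
  have hP_int : Integrable (fun r : ℝ => ∑ n ∈ Finset.range (N+1),
      ((-t)^n / (n.factorial : ℝ)) * (r^(2*ℓ+2*n+1) / (1 + Real.exp (2*π*r))))
      (volume.restrict (Ioi 0)) := integrable_finset_sum _ hterm_int
  have hbound_int : Integrable (fun r : ℝ =>
      (t^(N+1) / ((N+1).factorial : ℝ)) * (r^(2*ℓ+2*N+3) / (1 + Real.exp (2*π*r))))
      (volume.restrict (Ioi 0)) := (integrableOn_pow_div (2*ℓ+2*N+3)).const_mul _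
  have hmain : ‖∫ r in Ioi (0:ℝ),
      (r^(2*ℓ+1) * Real.exp (-(t*r^2)) / (1+Real.exp (2*π*r))
        - ∑ n ∈ Finset.range (N+1),
          ((-t)^n / (n.factorial : ℝ)) * (r^(2*ℓ+2*n+1) / (1 + Real.exp (2*π*r))))‖
      ≤ (t^(N+1) / ((N+1).factorial : ℝ)) * K := by
    refine le_trans (MeasureTheory.norm_integral_le_of_norm_le hbound_int ?_) ?_
    swap
    · refine le_of_eq ?_
      rw [MeasureTheory.integral_const_mul]
    refine ae_restrict_of_forall_mem measurableSet_Ioi (fun r hr => ?_)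
    ·
      have hr0 : (0:ℝ) < r := hr
      have h1 : r^(2*ℓ+1) * Real.exp (-(t*r^2)) / (1+Real.exp (2*π*r))
          - ∑ n ∈ Finset.range (N+1),
            ((-t)^n / (n.factorial : ℝ)) * (r^(2*ℓ+2*n+1) / (1 + Real.exp (2*π*r)))
          = (Real.exp (-(t*r^2)) - ∑ n ∈ Finset.range (N+1), (-(t*r^2))^n / n.factorial)
            * (r^(2*ℓ+1) / (1 + Real.exp (2*π*r))) := by
        rw [sub_mul, Finset.sum_mul]
        congr 1
        · ring
        · apply Finset.sum_congr rfl
          intro n _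
          rw [show (-(t*r^2)) = (-t)*r^2 by ring, mul_pow, ← pow_mul,
            show 2*ℓ+2*n+1 = 2*n+(2*ℓ+1) by ring, pow_add]
          ring
      rw [h1, norm_mul, Real.norm_eq_abs, Real.norm_eq_abs,
        abs_of_pos (by positivity : (0:ℝ) < r^(2*ℓ+1) / (1 + Real.exp (2*π*r)))]
      have h2 := exp_taylor_bound N (by positivity : (0:ℝ) ≤ t*r^2)
      calc |Real.exp (-(t*r^2)) - ∑ n ∈ Finset.range (N+1), (-(t*r^2))^n / n.factorial|
            * (r^(2*ℓ+1) / (1 + Real.exp (2*π*r)))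
          ≤ ((t*r^2)^(N+1) / ((N+1).factorial : ℝ)) * (r^(2*ℓ+1) / (1 + Real.exp (2*π*r))) := by
            apply mul_le_mul_of_nonneg_right h2 (by positivity)
        _ = (t^(N+1) / ((N+1).factorial : ℝ)) * (r^(2*ℓ+2*N+3) / (1 + Real.exp (2*π*r))) := by
            rw [mul_pow, ← pow_mul, show 2*ℓ+2*N+3 = 2*(N+1)+(2*ℓ+1) by ring, pow_add]
            ring
  rw [MeasureTheory.integral_sub hf_int hP_int] at hmain
  rw [← hsum_int] at hmain
  rw [Real.norm_eq_abs] at hmain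
  have habs : ∀ A B : ℝ, |2*A + -(2*B)| = 2*|A - B| := by
    intro A B
    rw [show (2:ℝ)*A + -(2*B) = 2*(A-B) by ring, abs_mul, abs_two]
  rw [habs]
  have htpow : (0:ℝ) < t^(N+1) := by positivity
  calc 2 * |(∫ r in Ioi (0:ℝ), r^(2*ℓ+1) * Real.exp (-(t*r^2)) / (1+Real.exp (2*π*r)))
        - ∑ n ∈ Finset.range (N+1), ((-t)^n / (n.factorial : ℝ)) * J n|
      ≤ 2 * ((t^(N+1) / ((N+1).factorial : ℝ)) * K) := by linarith
    _ = (2*K/((N+1).factorial : ℝ)) * t^(N+1) := by ring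
    _ ≤ (2*K/((N+1).factorial : ℝ) + 1) * t^(N+1) := by nlinarith
end

section
/- Let \(\alpha>0\) be real, \(\ell\) a natural number, and \(s\) a complex number with \(\operatorname{Re} s > \ell+1\). Then \[\int_{0}^{\infty} t^{s-1}\Big(\int_{0}^{\infty} r^{2\ell+1}\,\tanh(\pi r)\, e^{-t(r^{2}+\alpha^{2})}\,dr\Big)dt = \tfrac12\,\Gamma(\ell+1)\,\Gamma(s-\ell-1)\,\alpha^{2\ell+2-2s} \;-\; 2\,\Gamma(s)\int_{0}^{\infty} \frac{r^{2\ell+1}}{(r^{2}+\alpha^{2})^{s}\,(1+e^{2\pi r})}\,dr,\] where all integrals converge (the last integral converges for every complex \(s\)). -/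
open MeasureTheory Real Set Filter Asymptotics Topology

set_option maxHeartbeats 2000000


lemma ZA.integrableOn_of_expdecay {f : ℝ → ℂ} {a b : ℝ} (h0 : 0 < b)
    (hf : ContinuousOn f (Ici a)) (ho : f =O[atTop] fun x => Real.exp (-b * x)) :
    IntegrableOn f (Ioi a) :=
  Iff.mp integrableOn_Ici_iff_integrableOn_Ioi <|
    (hf.locallyIntegrableOn measurableSet_Ici).integrableOn_of_isBigO_atTop
      ho ⟨Ioi b, Ioi_mem_atTop b, exp_neg_integrableOn_Ioi b h0⟩

lemma ZA.norm_aux (α : ℝ) (ℓ : ℕ) (s' : ℂ) {r : ℝ} (hα : 0 < α) (hr : 0 < r) :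
    ‖(r : ℂ) ^ (2 * ℓ + 1) /
      ((((r ^ 2 + α ^ 2 : ℝ)) : ℂ) ^ s' * (1 + Real.exp (2 * π * r)))‖
      = r ^ (2 * ℓ + 1) * ((r ^ 2 + α ^ 2) ^ (-s'.re) * (1 + Real.exp (2 * π * r))⁻¹) := by
  have hq : (0:ℝ) < r ^ 2 + α ^ 2 := by positivity
  have he : (0:ℝ) < 1 + Real.exp (2 * π * r) := by positivity
  have h1 : ((1 : ℂ) + (Real.exp (2 * π * r) : ℝ)) = ((1 + Real.exp (2 * π * r) : ℝ) : ℂ) := by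
    push_cast; ring
  rw [norm_div, norm_mul, h1, Complex.norm_real, Real.norm_of_nonneg he.le,
    norm_pow, Complex.norm_real, Real.norm_of_nonneg hr.le,
    Complex.norm_cpow_eq_rpow_re_of_pos hq,
    div_eq_mul_inv, mul_inv, ← Real.rpow_neg hq.le]

lemma ZA.int_one (α : ℝ) (hα : 0 < α) (ℓ : ℕ) (s' : ℂ) :
    IntegrableOn (fun r : ℝ => (r : ℂ) ^ (2 * ℓ + 1) /
      ((((r ^ 2 + α ^ 2 : ℝ)) : ℂ) ^ s' * (1 + Real.exp (2 * π * r)))) (Ioi 0) := by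
  set c : ℝ := s'.re with hc
  set m : ℕ := ⌈|c|⌉₊ with hm
  apply ZA.integrableOn_of_expdecay Real.pi_pos
  · apply ContinuousOn.div
    · exact (Complex.continuous_ofReal.pow _).continuousOn
    · apply ContinuousOn.mul
      · intro r _
        have hq : (0:ℝ) < r ^ 2 + α ^ 2 := by positivity
        have hbase : ContinuousAt (fun r : ℝ => (((r ^ 2 + α ^ 2 : ℝ)) : ℂ)) r := by
          fun_prop
        exact (hbase.cpow continuousAt_const
          (by simpa using Complex.ofReal_mem_slitPlane.2 hq)).continuousWithinAt
      · have : Continuous fun r : ℝ => (1 : ℂ) + (Real.exp (2 * π * r) : ℝ) := by fun_prop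
        exact this.continuousOn
    · intro r _
      have hq : (0:ℝ) < r ^ 2 + α ^ 2 := by positivity
      apply mul_ne_zero
      · intro h0
        rw [Complex.cpow_eq_zero_iff] at h0
        exact (Complex.ofReal_ne_zero.2 hq.ne') h0.1
      · have h1 : ((1 : ℂ) + (Real.exp (2 * π * r) : ℝ))
            = ((1 + Real.exp (2 * π * r) : ℝ) : ℂ) := by push_cast; ring
        rw [h1]
        exact_mod_cast (by positivity : (1 + Real.exp (2 * π * r) : ℝ) ≠ 0)
  · -- Big-O
    set f := fun r : ℝ => (r : ℂ) ^ (2 * ℓ + 1) /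
      ((((r ^ 2 + α ^ 2 : ℝ)) : ℂ) ^ s' * (1 + Real.exp (2 * π * r))) with hf
    have hbound : ∀ᶠ r in atTop, ‖f r‖ * Real.exp (π * r)
        ≤ 2 ^ (m:ℝ) * (r ^ ((2*ℓ+1 : ℝ) + 2*m) * Real.exp (-π * r)) := by
      filter_upwards [eventually_ge_atTop (max 1 α)] with r hr
      have hr1 : (1:ℝ) ≤ r := le_trans (le_max_left 1 α) hr
      have hrα : α ≤ r := le_trans (le_max_right 1 α) hr
      have hr0 : (0:ℝ) < r := lt_of_lt_of_le one_pos hr1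
      have hq : (0:ℝ) < r ^ 2 + α ^ 2 := by positivity
      rw [ZA.norm_aux α ℓ s' hα hr0]
      have hx1 : (1:ℝ) ≤ r ^ 2 + α ^ 2 := by nlinarith
      have hx2 : r ^ 2 + α ^ 2 ≤ 2 * r ^ 2 := by nlinarith
      have e1 : (r ^ 2 + α ^ 2) ^ (-c) ≤ (2 * r ^ 2) ^ (m:ℝ) := by
        calc (r ^ 2 + α ^ 2) ^ (-c) ≤ (r ^ 2 + α ^ 2) ^ (m:ℝ) :=
              Real.rpow_le_rpow_of_exponent_le hx1
                (le_trans (neg_le_abs c) (Nat.le_ceil _))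
          _ ≤ (2 * r ^ 2) ^ (m:ℝ) :=
              Real.rpow_le_rpow hq.le hx2 (by positivity)
      have e2 : (1 + Real.exp (2 * π * r))⁻¹ ≤ Real.exp (-(2 * π * r)) := by
        rw [Real.exp_neg]
        exact inv_anti₀ (Real.exp_pos _) (by linarith [Real.exp_pos (2*π*r)])
      have e3 : (2 * r ^ 2) ^ (m:ℝ) = 2 ^ (m:ℝ) * r ^ (2*(m:ℝ)) := by
        rw [Real.mul_rpow (by norm_num) (by positivity), ← Real.rpow_natCast r 2,
          ← Real.rpow_mul hr0.le]
        norm_num [mul_comm]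
      have e4 : r ^ (2*ℓ+1) = r ^ ((2*ℓ+1 : ℕ):ℝ) := (Real.rpow_natCast r _).symm
      push_cast at e4
      have e5 : Real.exp (-(2*π*r)) * Real.exp (π * r) = Real.exp (-π * r) := by
        rw [← Real.exp_add]; ring_nf
      calc r ^ (2*ℓ+1) * ((r ^ 2 + α ^ 2) ^ (-c) * (1 + Real.exp (2 * π * r))⁻¹)
            * Real.exp (π * r)
          ≤ r ^ (2*ℓ+1) * ((2 * r ^ 2) ^ (m:ℝ) * Real.exp (-(2*π*r))) * Real.exp (π * r) := by
            have h2 : (0:ℝ) ≤ r ^ (2*ℓ+1) := by positivity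
            have := mul_le_mul e1 e2 (by positivity) (by positivity)
            have := mul_le_mul_of_nonneg_left this h2
            exact mul_le_mul_of_nonneg_right this (Real.exp_pos _).le
        _ = 2 ^ (m:ℝ) * (r ^ ((2*ℓ+1 : ℝ) + 2*m) * Real.exp (-π * r)) := by
            have e6 : r ^ ((2*ℓ+1 : ℝ) + 2*m) = r ^ (2*(ℓ:ℝ)+1) * r ^ (2*(m:ℝ)) :=
              Real.rpow_add hr0 _ _
            rw [e3, e4, ← e5, e6]
            ring
    have htend : Tendsto (fun r : ℝ => ‖f r‖ * Real.exp (π * r)) atTop (𝓝 0) := by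
      have hB : Tendsto (fun r : ℝ =>
          2 ^ (m:ℝ) * (r ^ ((2*ℓ+1 : ℝ) + 2*m) * Real.exp (-π * r))) atTop (𝓝 0) := by
        have := (tendsto_rpow_mul_exp_neg_mul_atTop_nhds_zero ((2*ℓ+1 : ℝ) + 2*m) π
          Real.pi_pos).const_mul ((2:ℝ) ^ (m:ℝ))
        simpa [neg_mul] using this
      apply squeeze_zero_norm' _ hB
      filter_upwards [hbound] with r h
      simpa [abs_of_nonneg (mul_nonneg (norm_nonneg _) (Real.exp_pos _).le)] using h
    have hev : ∀ᶠ r in atTop, ‖f r‖ ≤ 1 * ‖Real.exp (-π * r)‖ := by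
      filter_upwards [htend.eventually (eventually_le_nhds one_pos)] with r h
      have he : (0:ℝ) < Real.exp (π * r) := Real.exp_pos _
      rw [one_mul, Real.norm_of_nonneg (Real.exp_pos _).le, neg_mul, Real.exp_neg]
      have h2 : Real.exp (π*r) * (Real.exp (π*r))⁻¹ = 1 := mul_inv_cancel₀ he.ne'
      nlinarith [norm_nonneg (f r), inv_pos.2 he]
    exact Asymptotics.IsBigO.of_bound 1 hev


lemma ZA.cpow_exp_integrableOn {b : ℝ} (hb : 0 < b) {a : ℂ} (ha : 0 < a.re) :
    IntegrableOn (fun t : ℝ => (t:ℂ) ^ (a - 1) * Complex.exp (-(b * t))) (Ioi 0) := by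
  have hg : IntegrableOn (fun t : ℝ => t ^ (a.re - 1) * Real.exp (-(b * t))) (Ioi 0) := by
    have h := integrableOn_rpow_mul_exp_neg_mul_rpow
      (by linarith : (-1:ℝ) < a.re - 1) one_pos hb
    apply h.congr_fun ?_ measurableSet_Ioi
    intro t ht
    simp only [Real.rpow_one]
    ring_nf
  apply Integrable.mono' hg
  · apply ContinuousOn.aestronglyMeasurable ?_ measurableSet_Ioi
    intro t ht
    apply ContinuousAt.continuousWithinAt
    apply ContinuousAt.mul
    · exact (continuousAt_cpow_const
        (by simpa using Complex.ofReal_mem_slitPlane.2 ht)).comp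
        Complex.continuous_ofReal.continuousAt
    · exact (Complex.continuous_exp.comp (by fun_prop)).continuousAt
  · rw [ae_restrict_iff' measurableSet_Ioi]
    filter_upwards with t ht
    rw [norm_mul, Complex.norm_cpow_eq_rpow_re_of_pos ht,
      Complex.norm_exp]
    apply le_of_eq
    norm_num [Complex.sub_re]


-- Gaussian-weighted integrability for fixed t
lemma ZA.gauss_int (α : ℝ) (ℓ : ℕ) {t : ℝ} (ht : 0 < t) :
    IntegrableOn (fun r : ℝ => r ^ (2*ℓ+1) * Real.exp (-t*(r^2+α^2))) (Ioi 0) := by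
  have hcast : (-1:ℝ) < ((2*ℓ+1 : ℕ):ℝ) := by
    have : (0:ℝ) ≤ ((2*ℓ+1 : ℕ):ℝ) := Nat.cast_nonneg _
    linarith
  have h : IntegrableOn (fun x : ℝ =>
      Real.exp (-t*α^2) * (x ^ ((2*ℓ+1 : ℕ):ℝ) * Real.exp (-t * x ^ 2))) (Ioi 0) :=
    (integrableOn_rpow_mul_exp_neg_mul_sq ht hcast).const_mul (Real.exp (-t*α^2))
  apply h.congr_fun ?_ measurableSet_Ioi
  intro r hr
  simp only []
  rw [Real.rpow_natCast, show -t*(r^2+α^2) = -t*r^2 + -t*α^2 by ring, Real.exp_add]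
  ring

lemma ZA.inner_split (α : ℝ) (hα : 0 < α) (ℓ : ℕ) {t : ℝ} (ht : 0 < t) :
    (∫ r in Ioi (0:ℝ), r ^ (2*ℓ+1) * Real.tanh (π*r) * Real.exp (-t*(r^2+α^2)))
    = Real.exp (-(α^2*t)) * (t ^ (-(ℓ+1:ℝ)) * ((1/2) * Real.Gamma (ℓ+1)))
      - 2 * ∫ r in Ioi (0:ℝ),
          r ^ (2*ℓ+1) * (1+Real.exp (2*π*r))⁻¹ * Real.exp (-t*(r^2+α^2)) := by
  have hI : IntegrableOn (fun r : ℝ => r ^ (2*ℓ+1) * Real.exp (-t*(r^2+α^2))) (Ioi 0) :=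
    ZA.gauss_int α ℓ ht
  have hw : ∀ r : ℝ, (0:ℝ) < 1 + Real.exp (2*π*r) := fun r => by positivity
  have hI2 : IntegrableOn
      (fun r : ℝ => r ^ (2*ℓ+1) * (1+Real.exp (2*π*r))⁻¹ * Real.exp (-t*(r^2+α^2))) (Ioi 0) := by
    apply Integrable.mono' hI
    · apply ContinuousOn.aestronglyMeasurable ?_ measurableSet_Ioi
      apply Continuous.continuousOn
      exact ((continuous_pow _).mul ((by fun_prop : Continuous fun r : ℝ =>
        1 + Real.exp (2*π*r)).inv₀ (fun r => (hw r).ne'))).mul (by fun_prop)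
    · rw [ae_restrict_iff' measurableSet_Ioi]
      filter_upwards with r hr
      have h1 : (1+Real.exp (2*π*r))⁻¹ ≤ 1 := by
        rw [inv_le_one_iff₀]
        right; linarith [Real.exp_pos (2*π*r)]
      have h0 : (0:ℝ) ≤ (1+Real.exp (2*π*r))⁻¹ := (inv_pos.2 (hw r)).le
      have hr0 : (0:ℝ) ≤ r := le_of_lt hr
      have hrp : (0:ℝ) ≤ r ^ (2*ℓ+1) := pow_nonneg hr0 _
      rw [Real.norm_of_nonneg (by positivity)]
      have : r ^ (2*ℓ+1) * (1+Real.exp (2*π*r))⁻¹ ≤ r ^ (2*ℓ+1) * 1 :=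
        mul_le_mul_of_nonneg_left h1 hrp
      have := mul_le_mul_of_nonneg_right this (Real.exp_pos (-t*(r^2+α^2))).le
      simpa using this
  -- tanh rewrite and split
  have tanh_eq : ∀ x : ℝ, Real.tanh x = 1 - 2 * (1 + Real.exp (2 * x))⁻¹ := by
    intro x
    rw [Real.tanh_eq_sinh_div_cosh, Real.sinh_eq, Real.cosh_eq]
    have h1 : Real.exp (2 * x) = Real.exp x * Real.exp x := by rw [two_mul, Real.exp_add]
    have h2 : Real.exp (-x) = (Real.exp x)⁻¹ := Real.exp_neg x
    have h3 : Real.exp x ≠ 0 := (Real.exp_pos x).ne'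
    have h4 : 1 + Real.exp x * Real.exp x ≠ 0 := by positivity
    rw [h1, h2]
    have h5 : Real.exp x + (Real.exp x)⁻¹ ≠ 0 := by positivity
    field_simp
    ring
  have step1 : (∫ r in Ioi (0:ℝ), r ^ (2*ℓ+1) * Real.tanh (π*r) * Real.exp (-t*(r^2+α^2)))
      = (∫ r in Ioi (0:ℝ), (r ^ (2*ℓ+1) * Real.exp (-t*(r^2+α^2))
        - 2 * (r ^ (2*ℓ+1) * (1+Real.exp (2*π*r))⁻¹ * Real.exp (-t*(r^2+α^2))))) := by
    apply setIntegral_congr_fun measurableSet_Ioi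
    intro r hr
    simp only [tanh_eq]
    rw [show 2 * (π * r) = 2*π*r by ring]
    ring
  rw [step1, integral_sub hI (hI2.const_mul 2), integral_const_mul]
  congr 1
  -- Gaussian moment value
  have hval : (∫ r in Ioi (0:ℝ), r ^ (2*ℓ+1) * Real.exp (-t*(r^2+α^2)))
      = Real.exp (-(α^2*t)) * ∫ r in Ioi (0:ℝ), r ^ ((2*ℓ+1 : ℕ):ℝ) * Real.exp (-t*r^(2:ℝ)) := by
    rw [← integral_const_mul]
    apply setIntegral_congr_fun measurableSet_Ioi
    intro r hr
    simp only []
    have h2 : r ^ (2:ℝ) = r ^ 2 := by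
      rw [show (2:ℝ) = ((2:ℕ):ℝ) by norm_num, Real.rpow_natCast]
    rw [Real.rpow_natCast, h2, show -t*(r^2+α^2) = -(α^2*t) + -t*r^2 by ring, Real.exp_add]
    ring
  have hcast : (-1:ℝ) < ((2*ℓ+1 : ℕ):ℝ) := by
    have : (0:ℝ) ≤ ((2*ℓ+1 : ℕ):ℝ) := Nat.cast_nonneg _
    linarith
  rw [hval, integral_rpow_mul_exp_neg_mul_rpow two_pos hcast ht]
  have e1 : (-(((2*ℓ+1 : ℕ):ℝ) + 1) / 2) = -(ℓ+1:ℝ) := by push_cast; ring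
  have e2 : ((((2*ℓ+1 : ℕ):ℝ)) + 1) / 2 = (ℓ+1:ℝ) := by push_cast; ring
  rw [e1, e2]
  ring


lemma ZA.cpow_alpha {α : ℝ} (hα : 0 < α) (w : ℂ) :
    (1/(((α^2 : ℝ)):ℂ))^w = (α:ℂ) ^ (-(2*w)) := by
  have harg : Complex.arg ((α^2 : ℝ):ℂ) ≠ π := by
    rw [Complex.arg_ofReal_of_nonneg (by positivity)]
    exact Ne.symm Real.pi_ne_zero
  have h2 : ((α^2 : ℝ):ℂ) = (α:ℂ) ^ (2:ℂ) := by
    rw [Complex.ofReal_pow, ← Complex.cpow_natCast (α:ℂ) 2]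
    norm_num
  have him : (Complex.log (α:ℂ) * 2).im = 0 := by
    simp [Complex.mul_im, Complex.log_im, Complex.arg_ofReal_of_nonneg hα.le]
  rw [one_div, Complex.inv_cpow _ _ harg, ← Complex.cpow_neg, h2,
    ← Complex.cpow_mul _ (by rw [him]; linarith [Real.pi_pos])
      (by rw [him]; linarith [Real.pi_pos])]
  ring_nf

lemma ZA.gamma_cast (ℓ : ℕ) : ((Real.Gamma (ℓ+1) : ℝ) : ℂ) = Complex.Gamma ((ℓ:ℂ)+1) := by
  rw [← Complex.Gamma_ofReal]
  push_cast
  ring_nf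



lemma ZA.fubini_int (α : ℝ) (hα : 0 < α) (ℓ : ℕ) (s : ℂ) (hs0 : 0 < s.re) :
    Integrable (Function.uncurry fun (t r : ℝ) => (t:ℂ)^(s-1) *
      ((r ^ (2*ℓ+1) * (1+Real.exp (2*π*r))⁻¹ * Real.exp (-t*(r^2+α^2)) : ℝ) : ℂ))
      ((volume.restrict (Ioi 0)).prod (volume.restrict (Ioi 0))) := by
  have hA : ∀ r : ℝ, (0:ℝ) < r^2+α^2 := fun r => by positivity
  have hw : ∀ r : ℝ, (0:ℝ) < 1 + Real.exp (2*π*r) := fun r => by positivity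
  have hnormf : ∀ {t r : ℝ}, 0 < t → 0 ≤ r →
      ‖(t:ℂ)^(s-1) * ((r ^ (2*ℓ+1) * (1+Real.exp (2*π*r))⁻¹ * Real.exp (-t*(r^2+α^2)) : ℝ) : ℂ)‖
      = t ^ (s.re-1) * (r ^ (2*ℓ+1) * (1+Real.exp (2*π*r))⁻¹ * Real.exp (-t*(r^2+α^2))) := by
    intro t r ht hr
    have h0 : (0:ℝ) ≤ r ^ (2*ℓ+1) * (1+Real.exp (2*π*r))⁻¹ * Real.exp (-t*(r^2+α^2)) :=
      mul_nonneg (mul_nonneg (pow_nonneg hr _) (inv_pos.2 (hw r)).le) (Real.exp_pos _).le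
    rw [norm_mul, Complex.norm_cpow_eq_rpow_re_of_pos ht,
      Complex.norm_real, Real.norm_of_nonneg h0]
    norm_num [Complex.sub_re]
  have hmeas : AEStronglyMeasurable (Function.uncurry fun (t r : ℝ) => (t:ℂ)^(s-1) *
      ((r ^ (2*ℓ+1) * (1+Real.exp (2*π*r))⁻¹ * Real.exp (-t*(r^2+α^2)) : ℝ) : ℂ))
      ((volume.restrict (Ioi 0)).prod (volume.restrict (Ioi 0))) := by
    rw [Measure.prod_restrict]
    apply ContinuousOn.aestronglyMeasurable ?_ (measurableSet_Ioi.prod measurableSet_Ioi)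
    intro p hp
    apply ContinuousAt.continuousWithinAt
    apply ContinuousAt.mul
    · exact (continuousAt_cpow_const
        (by simpa using Complex.ofReal_mem_slitPlane.2 hp.1)).comp
        (Complex.continuous_ofReal.comp continuous_fst).continuousAt
    · apply Continuous.continuousAt
      apply Complex.continuous_ofReal.comp
      exact ((continuous_snd.pow _).mul ((by fun_prop : Continuous fun p : ℝ×ℝ =>
        1 + Real.exp (2*π*p.2)).inv₀ (fun p => (hw p.2).ne'))).mul (by fun_prop)
  refine (integrable_prod_iff' hmeas).2 ⟨?_, ?_⟩
  · simp only [Function.uncurry_apply_pair]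
    rw [ae_restrict_iff' measurableSet_Ioi]
    filter_upwards with r hr
    have base : IntegrableOn (fun t : ℝ =>
        ((r ^ (2*ℓ+1) * (1+Real.exp (2*π*r))⁻¹ : ℝ) : ℂ) *
          ((t:ℂ) ^ (s - 1) * Complex.exp (-(((r^2+α^2 : ℝ) : ℂ) * t)))) (Ioi 0) :=
      (ZA.cpow_exp_integrableOn (hA r) hs0).const_mul _
    apply base.congr
    rw [EventuallyEq, ae_restrict_iff' measurableSet_Ioi]
    filter_upwards with t ht
    have harg : (-(((r^2+α^2 : ℝ)):ℂ) * t) = ((-t*(r^2+α^2) : ℝ) : ℂ) := by push_cast; ring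
    rw [show (-((((r^2+α^2 : ℝ)):ℂ) * t)) = ((-t*(r^2+α^2) : ℝ) : ℂ) by push_cast; ring]
    rw [← Complex.ofReal_exp]
    push_cast
    ring
  · simp only [Function.uncurry_apply_pair]
    have target : Integrable (fun r : ℝ => Real.Gamma s.re *
        ‖(r : ℂ) ^ (2 * ℓ + 1) /
          ((((r ^ 2 + α ^ 2 : ℝ)) : ℂ) ^ ((s.re : ℂ)) * (1 + Real.exp (2 * π * r)))‖)
        (volume.restrict (Ioi 0)) :=
      ((ZA.int_one α hα ℓ (s.re : ℂ)).norm).const_mul _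
    apply target.congr
    rw [EventuallyEq, ae_restrict_iff' measurableSet_Ioi]
    filter_upwards with r hr
    have hval : (∫ t in Ioi (0:ℝ),
        ‖(t:ℂ)^(s-1) * ((r ^ (2*ℓ+1) * (1+Real.exp (2*π*r))⁻¹ *
          Real.exp (-t*(r^2+α^2)) : ℝ) : ℂ)‖)
        = (r ^ (2*ℓ+1) * (1+Real.exp (2*π*r))⁻¹) *
          ((1/(r^2+α^2)) ^ s.re * Real.Gamma s.re) := by
      rw [← Real.integral_rpow_mul_exp_neg_mul_Ioi hs0 (hA r), ← integral_const_mul]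
      apply setIntegral_congr_fun measurableSet_Ioi
      intro t ht
      simp only []
      rw [hnormf ht (le_of_lt hr)]
      rw [show -((r^2+α^2) * t) = -t*(r^2+α^2) by ring]
      ring
    rw [hval, ZA.norm_aux α ℓ ((s.re : ℂ)) hα hr]
    have e1 : (1/(r^2+α^2)) ^ s.re = (r^2+α^2) ^ (-s.re) := by
      rw [one_div, Real.inv_rpow (hA r).le, ← Real.rpow_neg (hA r).le]
    rw [e1]
    simp only [Complex.ofReal_re]
    ring

/-- Exact form of the even-dimensional identity component of the spectral zeta
function: for `α > 0`, `ℓ : ℕ` and `Re s > ℓ + 1`,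
`∫_0^∞ t^(s-1) (∫_0^∞ r^(2ℓ+1) tanh(πr) e^(-t(r²+α²)) dr) dt
  = ½ Γ(ℓ+1) Γ(s-ℓ-1) α^(2ℓ+2-2s) - 2 Γ(s) ∫_0^∞ r^(2ℓ+1)/((r²+α²)^s (1+e^(2πr))) dr`,
all integrals converging (the last one for every complex `s`). -/
theorem zeta_identity_component_even_dim (α : ℝ) (hα : 0 < α) (ℓ : ℕ) (s : ℂ)
    (hs : (ℓ : ℝ) + 1 < s.re) :
    (∀ s' : ℂ, IntegrableOn
      (fun r : ℝ => (r : ℂ) ^ (2 * ℓ + 1) /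
        ((((r ^ 2 + α ^ 2 : ℝ)) : ℂ) ^ s' * (1 + Real.exp (2 * π * r)))) (Ioi 0)) ∧
    IntegrableOn
      (fun t : ℝ => (t : ℂ) ^ (s - 1) *
        ((∫ r in Ioi (0 : ℝ), r ^ (2 * ℓ + 1) * Real.tanh (π * r) *
            Real.exp (-t * (r ^ 2 + α ^ 2)) : ℝ) : ℂ)) (Ioi 0) ∧
    ∫ t in Ioi (0 : ℝ), (t : ℂ) ^ (s - 1) *
        ((∫ r in Ioi (0 : ℝ), r ^ (2 * ℓ + 1) * Real.tanh (π * r) *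
            Real.exp (-t * (r ^ 2 + α ^ 2)) : ℝ) : ℂ) =
      (1 / 2) * Complex.Gamma ((ℓ : ℂ) + 1) * Complex.Gamma (s - (ℓ : ℂ) - 1) *
          (α : ℂ) ^ (2 * (ℓ : ℂ) + 2 - 2 * s) -
        2 * Complex.Gamma s *
          ∫ r in Ioi (0 : ℝ), (r : ℂ) ^ (2 * ℓ + 1) /
            ((((r ^ 2 + α ^ 2 : ℝ)) : ℂ) ^ s * (1 + Real.exp (2 * π * r))) := by
  have hℓ0 : (0:ℝ) ≤ (ℓ:ℝ) := Nat.cast_nonneg _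
  have hs0 : 0 < s.re := by linarith
  have hre : 0 < (s - (ℓ:ℂ) - 1).re := by
    simp only [Complex.sub_re, Complex.natCast_re, Complex.one_re]
    linarith
  have hα2 : (0:ℝ) < α^2 := by positivity
  have hA : ∀ r : ℝ, (0:ℝ) < r^2+α^2 := fun r => by positivity
  set C : ℝ := (1/2) * Real.Gamma (ℓ+1) with hC
  set I₂ : ℝ → ℝ := fun t => ∫ r in Ioi (0:ℝ),
    r ^ (2*ℓ+1) * (1+Real.exp (2*π*r))⁻¹ * Real.exp (-t*(r^2+α^2)) with hI₂
  -- G1 pointwise identity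
  have hG1eq : ∀ t ∈ Ioi (0:ℝ),
      ((t:ℂ)^(s-1) * ((Real.exp (-(α^2*t)) * (t ^ (-(ℓ+1:ℝ)) * C) : ℝ) : ℂ))
      = (C:ℂ) * ((t:ℂ)^((s - (ℓ:ℂ) - 1) - 1) * Complex.exp (-(((α^2:ℝ):ℂ) * t))) := by
    intro t ht
    have ht' : (0:ℝ) < t := ht
    have h1 : ((t ^ (-(ℓ+1:ℝ)) : ℝ) : ℂ) = (t:ℂ) ^ ((-(ℓ+1:ℝ) : ℝ):ℂ) :=
      Complex.ofReal_cpow ht'.le _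
    have h2 : ((-(ℓ+1:ℝ) : ℝ):ℂ) = -((ℓ:ℂ)+1) := by push_cast; ring
    have h3 : ((Real.exp (-(α^2*t)) : ℝ) : ℂ) = Complex.exp (-(((α^2:ℝ):ℂ) * t)) := by
      rw [Complex.ofReal_exp]
      congr 1
      push_cast
      ring
    have h4 : (t:ℂ) ^ (s-1) * (t:ℂ) ^ (-((ℓ:ℂ)+1)) = (t:ℂ)^((s - (ℓ:ℂ) - 1) - 1) := by
      rw [← Complex.cpow_add _ _ (Complex.ofReal_ne_zero.2 ht'.ne')]
      congr 1
      ring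
    push_cast [h1, h2, h3]
    rw [← h4]
    ring
  have hG1int : IntegrableOn (fun t : ℝ => (t:ℂ)^(s-1) *
      ((Real.exp (-(α^2*t)) * (t ^ (-(ℓ+1:ℝ)) * C) : ℝ) : ℂ)) (Ioi 0) := by
    have base : IntegrableOn (fun t : ℝ => (C:ℂ) *
        ((t:ℂ)^((s - (ℓ:ℂ) - 1) - 1) * Complex.exp (-(((α^2:ℝ):ℂ) * t)))) (Ioi 0) :=
      (ZA.cpow_exp_integrableOn hα2 hre).const_mul _
    exact base.congr_fun (fun t ht => (hG1eq t ht).symm) measurableSet_Ioi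
  have hG1val : (∫ t in Ioi (0:ℝ), (t:ℂ)^(s-1) *
        ((Real.exp (-(α^2*t)) * (t ^ (-(ℓ+1:ℝ)) * C) : ℝ) : ℂ))
      = (C:ℂ) * ((1/(((α^2:ℝ)):ℂ))^(s - (ℓ:ℂ) - 1) * Complex.Gamma (s - (ℓ:ℂ) - 1)) := by
    rw [setIntegral_congr_fun measurableSet_Ioi hG1eq, integral_const_mul,
      Complex.integral_cpow_mul_exp_neg_mul_Ioi hre hα2]
  -- G2 facts
  have hG2all : ∀ t : ℝ, (∫ r in Ioi (0:ℝ), (t:ℂ)^(s-1) *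
        ((r ^ (2*ℓ+1) * (1+Real.exp (2*π*r))⁻¹ * Real.exp (-t*(r^2+α^2)) : ℝ) : ℂ))
      = (t:ℂ)^(s-1) * ((I₂ t : ℝ) : ℂ) := by
    intro t
    rw [integral_const_mul, hI₂]
    congr 1
    exact integral_ofReal
  have hG2int : IntegrableOn (fun t : ℝ => (t:ℂ)^(s-1) * ((I₂ t : ℝ) : ℂ)) (Ioi 0) := by
    have h := (ZA.fubini_int α hα ℓ s hs0).integral_prod_left
    apply h.congr
    exact Filter.Eventually.of_forall (fun t => hG2all t)
  have hswap : (∫ t in Ioi (0:ℝ), (t:ℂ)^(s-1) * ((I₂ t : ℝ) : ℂ))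
      = ∫ r in Ioi (0:ℝ), ∫ t in Ioi (0:ℝ), (t:ℂ)^(s-1) *
        ((r ^ (2*ℓ+1) * (1+Real.exp (2*π*r))⁻¹ * Real.exp (-t*(r^2+α^2)) : ℝ) : ℂ) := by
    have hfun : (fun t : ℝ => (t:ℂ)^(s-1) * ((I₂ t : ℝ) : ℂ))
        = fun t : ℝ => ∫ r in Ioi (0:ℝ), (t:ℂ)^(s-1) *
          ((r ^ (2*ℓ+1) * (1+Real.exp (2*π*r))⁻¹ * Real.exp (-t*(r^2+α^2)) : ℝ) : ℂ) :=
      funext fun t => (hG2all t).symm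
    rw [hfun]
    exact integral_integral_swap (ZA.fubini_int α hα ℓ s hs0)
  have hinner : ∀ r ∈ Ioi (0:ℝ), (∫ t in Ioi (0:ℝ), (t:ℂ)^(s-1) *
        ((r ^ (2*ℓ+1) * (1+Real.exp (2*π*r))⁻¹ * Real.exp (-t*(r^2+α^2)) : ℝ) : ℂ))
      = Complex.Gamma s * ((r : ℂ) ^ (2 * ℓ + 1) /
          ((((r ^ 2 + α ^ 2 : ℝ)) : ℂ) ^ s * (1 + Real.exp (2 * π * r)))) := by
    intro r hr
    have step : (∫ t in Ioi (0:ℝ), (t:ℂ)^(s-1) *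
        ((r ^ (2*ℓ+1) * (1+Real.exp (2*π*r))⁻¹ * Real.exp (-t*(r^2+α^2)) : ℝ) : ℂ))
        = ∫ t in Ioi (0:ℝ), ((r ^ (2*ℓ+1) * (1+Real.exp (2*π*r))⁻¹ : ℝ) : ℂ) *
          ((t:ℂ)^(s-1) * Complex.exp (-((((r^2+α^2:ℝ)):ℂ) * t))) := by
      apply setIntegral_congr_fun measurableSet_Ioi
      intro t ht
      simp only []
      rw [show (-((((r^2+α^2 : ℝ)):ℂ) * t)) = ((-t*(r^2+α^2) : ℝ) : ℂ) by push_cast; ring]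
      rw [← Complex.ofReal_exp]
      push_cast
      ring
    rw [step, integral_const_mul, Complex.integral_cpow_mul_exp_neg_mul_Ioi hs0 (hA r)]
    have harg : Complex.arg ((r^2+α^2 : ℝ):ℂ) ≠ π := by
      rw [Complex.arg_ofReal_of_nonneg (hA r).le]
      exact Ne.symm Real.pi_ne_zero
    rw [one_div, Complex.inv_cpow _ _ harg]
    have hne : ((((r^2+α^2 : ℝ)):ℂ) ^ s) ≠ 0 := by
      intro h0
      rw [Complex.cpow_eq_zero_iff] at h0
      exact (Complex.ofReal_ne_zero.2 (hA r).ne') h0.1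
    have hne2 : ((1:ℂ) + (Real.exp (2*π*r) : ℝ)) ≠ 0 := by
      rw [show ((1:ℂ) + (Real.exp (2*π*r) : ℝ)) = ((1 + Real.exp (2*π*r) : ℝ) : ℂ) by
        push_cast; ring]
      exact_mod_cast (by positivity : (1 + Real.exp (2*π*r) : ℝ) ≠ 0)
    push_cast
    field_simp
  have hfinal2 : (∫ r in Ioi (0:ℝ), ∫ t in Ioi (0:ℝ), (t:ℂ)^(s-1) *
        ((r ^ (2*ℓ+1) * (1+Real.exp (2*π*r))⁻¹ * Real.exp (-t*(r^2+α^2)) : ℝ) : ℂ))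
      = Complex.Gamma s * ∫ r in Ioi (0:ℝ), (r : ℂ) ^ (2 * ℓ + 1) /
          ((((r ^ 2 + α ^ 2 : ℝ)) : ℂ) ^ s * (1 + Real.exp (2 * π * r))) := by
    rw [setIntegral_congr_fun measurableSet_Ioi hinner, integral_const_mul]
  -- splitting of the statement integrand
  have hsplit : ∀ t ∈ Ioi (0:ℝ),
      ((t : ℂ) ^ (s - 1) *
        ((∫ r in Ioi (0 : ℝ), r ^ (2 * ℓ + 1) * Real.tanh (π * r) *
            Real.exp (-t * (r ^ 2 + α ^ 2)) : ℝ) : ℂ))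
      = ((t:ℂ)^(s-1) * ((Real.exp (-(α^2*t)) * (t ^ (-(ℓ+1:ℝ)) * C) : ℝ) : ℂ))
        - 2 * ((t:ℂ)^(s-1) * ((I₂ t : ℝ) : ℂ)) := by
    intro t ht
    rw [ZA.inner_split α hα ℓ ht, hC]
    push_cast
    ring
  have key2 : IntegrableOn
      (fun t : ℝ => (t : ℂ) ^ (s - 1) *
        ((∫ r in Ioi (0 : ℝ), r ^ (2 * ℓ + 1) * Real.tanh (π * r) *
            Real.exp (-t * (r ^ 2 + α ^ 2)) : ℝ) : ℂ)) (Ioi 0) := by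
    have base : IntegrableOn (fun t : ℝ =>
        ((t:ℂ)^(s-1) * ((Real.exp (-(α^2*t)) * (t ^ (-(ℓ+1:ℝ)) * C) : ℝ) : ℂ))
          - 2 * ((t:ℂ)^(s-1) * ((I₂ t : ℝ) : ℂ))) (Ioi 0) :=
      hG1int.sub (hG2int.const_mul 2)
    exact base.congr_fun (fun t ht => (hsplit t ht).symm) measurableSet_Ioi
  refine ⟨fun s' => ZA.int_one α hα ℓ s', key2, ?_⟩
  rw [setIntegral_congr_fun measurableSet_Ioi hsplit,
    integral_sub hG1int (hG2int.const_mul 2), integral_const_mul, hG1val, hswap, hfinal2,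
    ZA.cpow_alpha hα (s - (ℓ:ℂ) - 1),
    show -(2*(s - (ℓ:ℂ) - 1)) = 2*(ℓ:ℂ)+2-2*s by ring]
  rw [hC]
  push_cast [ZA.gamma_cast ℓ]
  ring
end
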